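/- There exists a bijection T : C([0,1],ℝ) → C(𝕊¹,ℝ), where 𝕊¹ = {z ∈ ℂ : |z| = 1} is the unit circle, such that for all f,g ∈ C([0,1],ℝ): ({x ∈ [0,1] : f(x) ≠ 0} ∩ {x ∈ [0,1] : g(x) ≠ 0} = ∅) if and only if ({y ∈ 𝕊¹ : Tf(y) ≠ 0} ∩ {y ∈ 𝕊¹ : Tg(y) ≠ 0} = ∅). (In particular, the non-homeomorphic spaces [0,1] and 𝕊¹ have ⊥-isomorphic function spaces.) -/

import Mathlib

open Set Topology

/-! ### Generalities on regular open sets -/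

section RegOpen
variable {X : Type*} [TopologicalSpace X]

lemma closure_intCl {U : Set X} (hU : IsOpen U) :
    closure (interior (closure U)) = closure U :=
  Subset.antisymm (closure_minimal interior_subset isClosed_closure)
    (by simpa using closure_mono hU.subset_interior_closure)

lemma regOpen_idem {U : Set X} (hU : IsOpen U) :
    interior (closure (interior (closure U))) = interior (closure U) := by
  rw [closure_intCl hU]

lemma disj_reg {U V : Set X} (hU : IsOpen U) (hV : IsOpen V) :
    U ∩ V = ∅ ↔ interior (closure U) ∩ interior (closure V) = ∅ := by
  constructor
  · intro h
    by_contra hne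
    obtain ⟨x, hxU, hxV⟩ := nonempty_iff_ne_empty.2 hne
    have hW : IsOpen (interior (closure U) ∩ interior (closure V)) :=
      isOpen_interior.inter isOpen_interior
    have hxclU : x ∈ closure U := interior_subset hxU
    obtain ⟨y, hyW, hyU⟩ := mem_closure_iff.1 hxclU _ hW ⟨hxU, hxV⟩
    have hyclV : y ∈ closure V := interior_subset hyW.2
    obtain ⟨z, hz, hzV⟩ := mem_closure_iff.1 hyclV _ (hW.inter hU) ⟨hyW, hyU⟩
    exact absurd h (nonempty_iff_ne_empty.1 ⟨z, hz.2, hzV⟩)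
  · intro h
    exact eq_empty_of_subset_empty
      (h ▸ inter_subset_inter hU.subset_interior_closure hV.subset_interior_closure)

end RegOpen

section OE
variable {Y X : Type*} [TopologicalSpace Y] [TopologicalSpace X] {j : Y → X}

lemma oe_preim_closure (hj : IsOpenEmbedding j) (A : Set X) :
    j ⁻¹' closure A = closure (j ⁻¹' A) := by
  apply Subset.antisymm
  · intro x hx
    rw [mem_closure_iff]
    intro o ho hxo
    obtain ⟨z, hz, hzA⟩ := mem_closure_iff.1 hx (j '' o) (hj.isOpenMap o ho) ⟨x, hxo, rfl⟩
    obtain ⟨y, hy, rfl⟩ := hz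
    exact ⟨y, hy, hzA⟩
  · exact hj.continuous.closure_preimage_subset A

lemma oe_preim_interior (hj : IsOpenEmbedding j) (A : Set X) :
    j ⁻¹' interior A = interior (j ⁻¹' A) := by
  apply Subset.antisymm
  · exact interior_maximal (preimage_mono interior_subset)
      (hj.continuous.isOpen_preimage _ isOpen_interior)
  · intro x hx
    have hmem : j x ∈ j '' interior (j ⁻¹' A) := ⟨x, hx, rfl⟩
    have hsub : j '' interior (j ⁻¹' A) ⊆ A := by
      rintro _ ⟨y, hy, rfl⟩; exact (interior_subset hy : y ∈ j ⁻¹' A)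
    exact interior_maximal hsub (hj.isOpenMap _ isOpen_interior) hmem

lemma dense_closure_inter {D V : Set X} (hD : Dense D) (hV : IsOpen V) :
    closure (V ∩ D) = closure V := by
  apply Subset.antisymm (closure_mono inter_subset_left)
  intro x hx
  rw [mem_closure_iff]
  intro o ho hxo
  obtain ⟨y, hy, hyV⟩ := mem_closure_iff.1 hx o ho hxo
  obtain ⟨z, hz⟩ := hD.inter_open_nonempty (o ∩ V) (ho.inter hV) ⟨y, hy, hyV⟩
  exact ⟨z, hz.1.1, hz.1.2, hz.2⟩

end OE

/-! ### The type of regular open sets and the equivalence induced by a dense open embedding -/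

def RO (X : Type*) [TopologicalSpace X] := {U : Set X // interior (closure U) = U}

lemma RO.isOpen {X : Type*} [TopologicalSpace X] (R : RO X) : IsOpen R.1 :=
  R.2 ▸ isOpen_interior

section roE
variable {Y X : Type*} [TopologicalSpace Y] [TopologicalSpace X] {j : Y → X}

noncomputable def roEquiv (hj : IsOpenEmbedding j) (hd : Dense (range j)) :
    RO Y ≃ RO X where
  toFun R := ⟨interior (closure (j '' R.1)), regOpen_idem (hj.isOpenMap _ R.isOpen)⟩
  invFun V := ⟨j ⁻¹' V.1, by
    rw [← oe_preim_closure hj, ← oe_preim_interior hj, V.2]⟩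
  left_inv R := Subtype.ext (by
    show j ⁻¹' interior (closure (j '' R.1)) = R.1
    rw [oe_preim_interior hj, oe_preim_closure hj, preimage_image_eq _ hj.injective]
    exact R.2)
  right_inv V := Subtype.ext (by
    show interior (closure (j '' (j ⁻¹' V.1))) = V.1
    rw [image_preimage_eq_inter_range, dense_closure_inter hd V.isOpen]
    exact V.2)

lemma roEquiv_disj (hj : IsOpenEmbedding j) (hd : Dense (range j)) (R R' : RO Y) :
    R.1 ∩ R'.1 = ∅ ↔ (roEquiv hj hd R).1 ∩ (roEquiv hj hd R').1 = ∅ := by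
  rw [show R.1 ∩ R'.1 = ∅ ↔ j '' R.1 ∩ j '' R'.1 = ∅ by
      rw [← image_inter hj.injective, image_eq_empty]]
  exact disj_reg (hj.isOpenMap _ R.isOpen) (hj.isOpenMap _ R'.isOpen)

end roE

/-! ### Cardinality of fibers -/

lemma card_C_le (X : Type) [TopologicalSpace X] [TopologicalSpace.SeparableSpace X] :
    Cardinal.mk C(X, ℝ) ≤ Cardinal.continuum := by
  obtain ⟨D, hDc, hDd⟩ := TopologicalSpace.exists_countable_dense X
  have hinj : Function.Injective (fun (f : C(X, ℝ)) (d : ↥D) => f d) := by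
    intro f g h
    ext x
    have hfg := Continuous.ext_on hDd f.continuous g.continuous
      (fun y hy => congrFun h ⟨y, hy⟩)
    exact congrFun hfg x
  calc Cardinal.mk C(X, ℝ) ≤ Cardinal.mk (↥D → ℝ) := Cardinal.mk_le_of_injective hinj
    _ = Cardinal.mk ℝ ^ Cardinal.mk ↥D := by
        set_option linter.unnecessarySimpa false in
        simpa using Cardinal.mk_arrow ↥D ℝ
    _ ≤ Cardinal.continuum ^ Cardinal.aleph0 := by
        rw [Cardinal.mk_real]
        exact Cardinal.power_le_power_left Cardinal.continuum_ne_zero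
          (haveI := hDc.to_subtype; Cardinal.mk_le_aleph0)
    _ = Cardinal.continuum := Cardinal.continuum_power_aleph0

lemma coz_isOpen {X : Type} [TopologicalSpace X] (f : C(X, ℝ)) :
    IsOpen {x | f x ≠ 0} :=
  isOpen_compl_iff.2 (isClosed_singleton.preimage f.continuous)

lemma fiber_zero {X : Type} [TopologicalSpace X] (f : C(X, ℝ))
    (h : interior (closure {x | f x ≠ 0}) = ∅) : f = 0 := by
  have h1 : {x | f x ≠ 0} ⊆ (∅ : Set X) :=
    h ▸ (coz_isOpen f).subset_interior_closure
  ext x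
  by_contra hx
  exact h1 hx

lemma fiber_card {X : Type} [MetricSpace X] [TopologicalSpace.SeparableSpace X]
    {R : Set X} (hR : interior (closure R) = R) (hne : R.Nonempty) :
    Cardinal.mk {f : C(X, ℝ) // interior (closure {x | f x ≠ 0}) = R}
      = Cardinal.continuum := by
  have hRopen : IsOpen R := hR ▸ isOpen_interior
  obtain ⟨f₀, hcoz⟩ : ∃ f₀ : C(X, ℝ), {x | f₀ x ≠ 0} = R := by
    by_cases hc : Rᶜ = ∅
    · refine ⟨ContinuousMap.const X 1, ?_⟩
      have hu : R = univ := by rw [← compl_empty_iff, hc]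
      simp [hu]
    · have hcn : Rᶜ.Nonempty := nonempty_iff_ne_empty.2 hc
      refine ⟨⟨fun x => Metric.infDist x Rᶜ, Metric.continuous_infDist_pt _⟩, ?_⟩
      ext x
      simp only [ContinuousMap.coe_mk, mem_setOf_eq]
      constructor
      · intro hx
        by_contra hxR
        exact hx (le_antisymm (le_of_not_gt fun hlt =>
          ((hRopen.isClosed_compl.notMem_iff_infDist_pos hcn).2 hlt : x ∉ Rᶜ) hxR)
          Metric.infDist_nonneg)
      · intro hx
        have hnc : x ∉ Rᶜ := fun h => h hx
        exact ne_of_gt ((hRopen.isClosed_compl.notMem_iff_infDist_pos hcn).1 hnc)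
  apply le_antisymm
  · exact (Cardinal.mk_subtype_le _).trans (card_C_le X)
  · rw [← Cardinal.mk_real]
    apply Cardinal.mk_le_of_injective (f := fun t : ℝ =>
      (⟨Real.exp t • f₀, by
        have hcz : {x | (Real.exp t • f₀) x ≠ 0} = R := by
          rw [← hcoz]; ext x
          simp [Real.exp_ne_zero t]
        rw [hcz, hR]⟩ :
        {f : C(X, ℝ) // interior (closure {x | f x ≠ 0}) = R}))
    intro t s h
    obtain ⟨x₀, hx₀⟩ := hne
    have hfx : f₀ x₀ ≠ 0 := by rw [← hcoz] at hx₀; exact hx₀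
    have hval := congrArg (fun u => (u : {f : C(X, ℝ) // _}).1 x₀) h
    simp only [ContinuousMap.smul_apply, smul_eq_mul] at hval
    exact Real.exp_injective (mul_right_cancel₀ hfx hval)

/-! ### The abstract gluing lemma -/

lemma glue {α β κ κ' : Type*} (ka : α → κ) (kb : β → κ') (e : κ ≃ κ')
    (F : ∀ R, {a // ka a = R} ≃ {b // kb b = e R}) :
    ∃ T : α → β, Function.Bijective T ∧ ∀ a, kb (T a) = e (ka a) := by
  have hcompat : ∀ (R R' : κ) (_ : R = R') (v : α) (hv : ka v = R) (hv' : ka v = R'),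
      ((F R) ⟨v, hv⟩).1 = ((F R') ⟨v, hv'⟩).1 := by
    rintro R R' rfl v hv hv'; rfl
  refine ⟨fun a => ((F (ka a)) ⟨a, rfl⟩).1, ⟨?_, ?_⟩, fun a => ((F (ka a)) ⟨a, rfl⟩).2⟩
  · intro a a' h
    simp only at h
    have h1 : e (ka a) = e (ka a') := by
      rw [← ((F (ka a)) ⟨a, rfl⟩).2, ← ((F (ka a')) ⟨a', rfl⟩).2, h]
    have h2 : ka a = ka a' := e.injective h1
    have h3 : ((F (ka a)) ⟨a', h2.symm⟩).1 = ((F (ka a)) ⟨a, rfl⟩).1 := by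
      rw [h, hcompat (ka a) (ka a') h2 a' h2.symm rfl]
    have h4 := (F (ka a)).injective (Subtype.ext h3)
    exact (congrArg Subtype.val h4).symm
  · intro b
    have hb : kb b = e (e.symm (kb b)) := (e.apply_symm_apply _).symm
    set x := (F (e.symm (kb b))).symm ⟨b, hb⟩ with hx
    refine ⟨x.1, ?_⟩
    show ((F (ka x.1)) ⟨x.1, rfl⟩).1 = b
    have hx2 : ka x.1 = e.symm (kb b) := x.2
    have happ : ((F (e.symm (kb b))) ⟨x.1, hx2⟩).1 = b := by
      have h5 : (⟨x.1, hx2⟩ : {a // ka a = e.symm (kb b)}) = x := Subtype.ext rfl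
      rw [h5, hx]
      exact congrArg Subtype.val ((F _).apply_symm_apply ⟨b, hb⟩)
    rw [hcompat (ka x.1) (e.symm (kb b)) hx2 x.1 rfl hx2]
    exact happ

/-! ### The exponential parametrization of the circle -/

noncomputable def phi (t : ℝ) : ℂ := Complex.exp (((2 * Real.pi * t : ℝ) : ℂ) * Complex.I)

lemma phi_cont : Continuous phi := by
  unfold phi; fun_prop

lemma phi_abs (t : ℝ) : ‖phi t‖ = 1 := by
  simp [phi, Complex.norm_exp]

lemma phi_mem_sphere (t : ℝ) : phi t ∈ Metric.sphere (0 : ℂ) 1 := by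
  simp [mem_sphere_zero_iff_norm, phi_abs]

lemma two_pi_ne : (2 * Real.pi : ℝ) ≠ 0 := by positivity

lemma phi_zero : phi 0 = 1 := by simp [phi]

lemma phi_one : phi 1 = 1 := by
  have : ((2 * Real.pi * 1 : ℝ) : ℂ) * Complex.I = 2 * (Real.pi : ℂ) * Complex.I := by
    push_cast; ring
  rw [phi, this, Complex.exp_two_pi_mul_I]

open Complex in
lemma phi_ne_one {t : ℝ} (ht : t ∈ Ioo (0:ℝ) 1) : phi t ≠ 1 := by
  intro h
  rw [phi, Complex.exp_eq_one_iff] at h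
  obtain ⟨n, hn⟩ := h
  have h2 : ((2 * Real.pi * t : ℝ) : ℂ) * I = ((n : ℂ) * (2 * (Real.pi : ℂ))) * I := by
    rw [hn]; ring
  have h3 : ((2 * Real.pi * t : ℝ) : ℂ) = (n : ℂ) * (2 * (Real.pi : ℂ)) :=
    mul_right_cancel₀ Complex.I_ne_zero h2
  have hr : 2 * Real.pi * t = (n : ℝ) * (2 * Real.pi) := by exact_mod_cast h3
  have hr2 : 2 * Real.pi * t = 2 * Real.pi * (n : ℝ) := by linarith
  have htn : t = (n : ℝ) := mul_left_cancel₀ two_pi_ne hr2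
  have h0 : (0 : ℤ) < n := by exact_mod_cast htn ▸ ht.1
  have h1 : (n : ℤ) < 1 := by exact_mod_cast htn ▸ ht.2
  omega

open Complex in
lemma phi_inj {s t : ℝ} (hs : s ∈ Ioo (0:ℝ) 1) (ht : t ∈ Ioo (0:ℝ) 1)
    (h : phi s = phi t) : s = t := by
  rw [phi, phi, Complex.exp_eq_exp_iff_exists_int] at h
  obtain ⟨n, hn⟩ := h
  have h2 : ((2 * Real.pi * s : ℝ) : ℂ) * I
      = (((2 * Real.pi * t : ℝ) : ℂ) + (n : ℂ) * (2 * (Real.pi : ℂ))) * I := by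
    rw [hn]; ring
  have h3 := mul_right_cancel₀ Complex.I_ne_zero h2
  have hr : 2 * Real.pi * s = 2 * Real.pi * t + (n : ℝ) * (2 * Real.pi) := by
    exact_mod_cast h3
  have hr2 : 2 * Real.pi * s = 2 * Real.pi * (t + (n : ℝ)) := by linarith
  have hst : s = t + (n : ℝ) := mul_left_cancel₀ two_pi_ne hr2
  have h0 : (-1 : ℤ) < n := by
    have : (-1 : ℝ) < (n : ℝ) := by
      have := hs.1; have := ht.2; linarith [hst]
    exact_mod_cast this
  have h1 : (n : ℤ) < 1 := by
    have : ((n : ℝ)) < 1 := by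
      have := hs.2; have := ht.1; linarith [hst]
    exact_mod_cast this
  have hn0 : n = 0 := by omega
  rw [hn0] at hst; simpa using hst

open Complex in
lemma phi_surj {z : ℂ} (hz : ‖z‖ = 1) (hz1 : z ≠ 1) :
    ∃ t ∈ Ioo (0:ℝ) 1, phi t = z := by
  have harg : Complex.exp ((z.arg : ℂ) * I) = z := by
    have := Complex.norm_mul_exp_arg_mul_I z
    rwa [hz, Complex.ofReal_one, one_mul] at this
  have hargne : z.arg ≠ 0 := by
    intro h
    rw [h] at harg
    simp at harg
    exact hz1 harg.symm
  have hpi := Real.pi_pos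
  rcases lt_or_gt_of_ne hargne with hneg | hpos
  · refine ⟨z.arg / (2 * Real.pi) + 1, ⟨?_, ?_⟩, ?_⟩
    · have hgt := Complex.neg_pi_lt_arg z
      have h1 : (-1 : ℝ) < z.arg / (2 * Real.pi) := by
        rw [lt_div_iff₀ (by positivity : (0:ℝ) < 2 * Real.pi)]
        nlinarith
      linarith
    · have : z.arg / (2 * Real.pi) < 0 := div_neg_of_neg_of_pos hneg (by positivity)
      linarith
    · have hteq : 2 * Real.pi * (z.arg / (2 * Real.pi) + 1) = z.arg + 2 * Real.pi := by
        field_simp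
      rw [phi, hteq]
      push_cast
      rw [add_mul, Complex.exp_add, harg]
      have h2pi : Complex.exp ((2 : ℂ) * (Real.pi : ℂ) * I) = 1 :=
        Complex.exp_two_pi_mul_I
      rw [h2pi, mul_one]
  · refine ⟨z.arg / (2 * Real.pi), ⟨div_pos hpos (by positivity), ?_⟩, ?_⟩
    · rw [div_lt_one (by positivity)]
      have := Complex.arg_le_pi z
      linarith
    · have hteq : 2 * Real.pi * (z.arg / (2 * Real.pi)) = z.arg := by
        field_simp
      rw [phi, hteq]
      exact harg

/-! ### The two dense open subsets and the homeomorphism between them -/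

def D1 : Set ↥(Set.Icc (0:ℝ) 1) := Subtype.val ⁻¹' (Ioo 0 1)
def D2 : Set ↥(Metric.sphere (0:ℂ) 1) := Subtype.val ⁻¹' ({1}ᶜ)

lemma hD1open : IsOpen D1 := isOpen_Ioo.preimage continuous_subtype_val
lemma hD2open : IsOpen D2 := isOpen_compl_singleton.preimage continuous_subtype_val

lemma denseD1 : Dense D1 := by
  intro x
  rw [closure_subtype]
  have himg : (Subtype.val '' D1 : Set ℝ) = Ioo 0 1 := by
    rw [D1, Subtype.image_preimage_coe]
    exact inter_eq_self_of_subset_right Ioo_subset_Icc_self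
  rw [himg, closure_Ioo (by norm_num : (0:ℝ) ≠ 1)]
  exact x.2

lemma sphere_abs (z : ↥(Metric.sphere (0:ℂ) 1)) : ‖z.1‖ = 1 := by
  have := z.2
  rwa [mem_sphere_zero_iff_norm] at this

lemma sphere_subset_phi_Icc :
    (Metric.sphere (0:ℂ) 1 : Set ℂ) ⊆ phi '' (Icc 0 1) := by
  intro w hw
  have habs : ‖w‖ = 1 := by
    rwa [mem_sphere_zero_iff_norm] at hw
  by_cases hw1 : w = 1
  · exact ⟨0, ⟨le_refl 0, zero_le_one⟩, by rw [phi_zero, hw1]⟩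
  · obtain ⟨t, ht, hphit⟩ := phi_surj habs hw1
    exact ⟨t, Ioo_subset_Icc_self ht, hphit⟩

lemma denseD2 : Dense D2 := by
  intro z
  rw [closure_subtype]
  have himg : (Subtype.val '' D2 : Set ℂ) = Metric.sphere (0:ℂ) 1 ∩ {1}ᶜ := by
    rw [D2, Subtype.image_preimage_coe]
  rw [himg]
  have hphiIoo : phi '' (Ioo 0 1) ⊆ Metric.sphere (0:ℂ) 1 ∩ {1}ᶜ := by
    rintro _ ⟨t, ht, rfl⟩
    exact ⟨phi_mem_sphere t, phi_ne_one ht⟩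
  have himgcl : phi '' (Icc 0 1) ⊆ closure (phi '' (Ioo 0 1)) := by
    rw [← closure_Ioo (by norm_num : (0:ℝ) ≠ 1)]
    exact image_closure_subset_closure_image phi_cont
  exact closure_mono hphiIoo (himgcl (sphere_subset_phi_Icc z.2))

noncomputable def mmap (x : ↥D1) : ↥D2 :=
  ⟨⟨phi x.1.1, phi_mem_sphere _⟩, by
    simp only [D2, mem_preimage, mem_compl_iff, mem_singleton_iff]
    exact phi_ne_one x.2⟩

lemma mmap_cont : Continuous mmap := by
  apply Continuous.subtype_mk
  apply Continuous.subtype_mk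
  exact phi_cont.comp (continuous_subtype_val.comp continuous_subtype_val)

lemma mmap_bij : Function.Bijective mmap := by
  constructor
  · intro a b h
    have := congrArg (fun z => (z.1.1 : ℂ)) h
    exact Subtype.ext (Subtype.ext (phi_inj a.2 b.2 this))
  · intro z
    have habs : ‖z.1.1‖ = 1 := sphere_abs z.1
    have hz1 : z.1.1 ≠ 1 := z.2
    obtain ⟨t, ht, hphit⟩ := phi_surj habs hz1
    exact ⟨⟨⟨t, Ioo_subset_Icc_self ht⟩, ht⟩, Subtype.ext (Subtype.ext hphit)⟩

lemma mmap_closed : IsClosedMap mmap := by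
  intro C hC
  set A : Set ↥(Set.Icc (0:ℝ) 1) := Subtype.val '' C with hA
  set A' := closure A with hA'
  have hcompact : IsCompact A' := isClosed_closure.isCompact
  have hAD : ∀ x, x ∈ A' → ∀ hxD : x ∈ D1, (⟨x, hxD⟩ : ↥D1) ∈ C := by
    intro x hx hxD
    have hmem : (⟨x, hxD⟩ : ↥D1) ∈ closure C := by
      rw [closure_subtype]; exact hx
    rwa [hC.closure_eq] at hmem
  have hF : Continuous (fun x : ↥(Set.Icc (0:ℝ) 1) => phi x.1) :=
    phi_cont.comp continuous_subtype_val
  have himgc : IsClosed ((fun x : ↥(Set.Icc (0:ℝ) 1) => phi x.1) '' A') :=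
    (hcompact.image hF).isClosed
  have key : mmap '' C
      = (fun z : ↥D2 => (z.1.1 : ℂ)) ⁻¹' ((fun x : ↥(Set.Icc (0:ℝ) 1) => phi x.1) '' A') := by
    ext z
    constructor
    · rintro ⟨c, hc, rfl⟩
      exact ⟨c.1, subset_closure ⟨c, hc, rfl⟩, rfl⟩
    · rintro ⟨x, hx, hxz⟩
      simp only at hxz
      have hxD : x ∈ D1 := by
        by_contra hxD
        have h01 : (x : ℝ) = 0 ∨ (x : ℝ) = 1 := by
          have hIcc := x.2
          simp only [D1, mem_preimage, mem_Ioo, not_and_or, not_lt] at hxD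
          rcases hxD with h | h
          · exact Or.inl (le_antisymm h hIcc.1)
          · exact Or.inr (le_antisymm hIcc.2 h)
        have hphix : phi x.1 = 1 := by
          rcases h01 with h | h <;> rw [h]
          · exact phi_zero
          · exact phi_one
        have : z.1.1 = 1 := by rw [← hxz, hphix]
        exact z.2 this
      have hcC := hAD x hx hxD
      refine ⟨⟨x, hxD⟩, hcC, ?_⟩
      exact Subtype.ext (Subtype.ext hxz)
  rw [key]
  exact himgc.preimage (continuous_subtype_val.comp continuous_subtype_val)

lemma mmap_open : IsOpenMap mmap := by
  intro U hU
  rw [← compl_compl (mmap '' U), ← Set.image_compl_eq mmap_bij]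
  exact (mmap_closed _ hU.isClosed_compl).isOpen_compl

noncomputable def hHomeo : ↥D1 ≃ₜ ↥D2 :=
  Equiv.toHomeomorphOfContinuousOpen (Equiv.ofBijective mmap mmap_bij) mmap_cont mmap_open

noncomputable def Jmap : ↥D1 → ↥(Metric.sphere (0:ℂ) 1) := Subtype.val ∘ hHomeo

lemma Jmap_oe : IsOpenEmbedding Jmap :=
  hD2open.isOpenEmbedding_subtypeVal.comp hHomeo.isOpenEmbedding

lemma Jmap_dense : Dense (range Jmap) := by
  have hr : range Jmap = D2 := by
    rw [Jmap, range_comp, hHomeo.surjective.range_eq, image_univ, Subtype.range_coe]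
  rw [hr]
  exact denseD2

lemma j1_oe : IsOpenEmbedding (Subtype.val : ↥D1 → ↥(Set.Icc (0:ℝ) 1)) :=
  hD1open.isOpenEmbedding_subtypeVal

lemma j1_dense : Dense (range (Subtype.val : ↥D1 → ↥(Set.Icc (0:ℝ) 1))) := by
  rw [Subtype.range_coe]; exact denseD1

noncomputable def eRO : RO ↥(Set.Icc (0:ℝ) 1) ≃ RO ↥(Metric.sphere (0:ℂ) 1) :=
  (roEquiv j1_oe j1_dense).symm.trans (roEquiv Jmap_oe Jmap_dense)

lemma eRO_disj (R R' : RO ↥(Set.Icc (0:ℝ) 1)) :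
    R.1 ∩ R'.1 = ∅ ↔ (eRO R).1 ∩ (eRO R').1 = ∅ := by
  have h1 := roEquiv_disj j1_oe j1_dense ((roEquiv j1_oe j1_dense).symm R)
    ((roEquiv j1_oe j1_dense).symm R')
  rw [Equiv.apply_symm_apply, Equiv.apply_symm_apply] at h1
  have h2 := roEquiv_disj Jmap_oe Jmap_dense ((roEquiv j1_oe j1_dense).symm R)
    ((roEquiv j1_oe j1_dense).symm R')
  exact h1.symm.trans h2

lemma eRO_empty (R : RO ↥(Set.Icc (0:ℝ) 1)) : R.1 = ∅ ↔ (eRO R).1 = ∅ := by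
  have := eRO_disj R R
  rwa [inter_self, inter_self] at this

/-! ### Main theorem -/

/-- `C([0,1])` and `C(𝕊¹)` are `⊥`-isomorphic: there is a bijection
`T : C([0,1],ℝ) → C(𝕊¹,ℝ)` preserving disjointness in both directions. -/
theorem stmt_5 :
    ∃ T : C(↥(Set.Icc (0 : ℝ) 1), ℝ) → C(↥(Metric.sphere (0 : ℂ) 1), ℝ),
      Function.Bijective T ∧
      ∀ f g : C(↥(Set.Icc (0 : ℝ) 1), ℝ),
        ({x | f x ≠ 0} ∩ {x | g x ≠ 0} = ∅ ↔
         {y | T f y ≠ 0} ∩ {y | T g y ≠ 0} = ∅) := by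
  classical
  set ka : C(↥(Set.Icc (0 : ℝ) 1), ℝ) → RO ↥(Set.Icc (0:ℝ) 1) :=
    fun f => ⟨interior (closure {x | f x ≠ 0}), regOpen_idem (coz_isOpen f)⟩ with hka
  set kb : C(↥(Metric.sphere (0 : ℂ) 1), ℝ) → RO ↥(Metric.sphere (0:ℂ) 1) :=
    fun g => ⟨interior (closure {y | g y ≠ 0}), regOpen_idem (coz_isOpen g)⟩ with hkb
  have hF : ∀ R, Nonempty ({f // ka f = R} ≃ {g // kb g = eRO R}) := by
    intro R
    by_cases hR : R.1 = ∅
    · have hR' : (eRO R).1 = ∅ := (eRO_empty R).1 hR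
      have ha : ∀ f : {f // ka f = R}, f.1 = 0 := by
        intro f
        apply fiber_zero
        have := congrArg Subtype.val f.2
        simp only [hka] at this
        rw [this, hR]
      have hb : ∀ g : {g // kb g = eRO R}, g.1 = 0 := by
        intro g
        apply fiber_zero
        have := congrArg Subtype.val g.2
        simp only [hkb] at this
        rw [this, hR']
      have h0a : ka 0 = R := by
        apply Subtype.ext
        show interior (closure {x | (0 : C(↥(Set.Icc (0:ℝ) 1), ℝ)) x ≠ 0}) = R.1
        have : {x | (0 : C(↥(Set.Icc (0:ℝ) 1), ℝ)) x ≠ 0} = (∅ : Set _) := by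
          ext x; simp
        rw [this, hR]; simp
      have h0b : kb 0 = eRO R := by
        apply Subtype.ext
        show interior (closure {y | (0 : C(↥(Metric.sphere (0:ℂ) 1), ℝ)) y ≠ 0}) = (eRO R).1
        have : {y | (0 : C(↥(Metric.sphere (0:ℂ) 1), ℝ)) y ≠ 0} = (∅ : Set _) := by
          ext y; simp
        rw [this, hR']; simp
      haveI ua : Unique {f // ka f = R} :=
        { default := ⟨0, h0a⟩,
          uniq := fun f => Subtype.ext (ha f) }
      haveI ub : Unique {g // kb g = eRO R} :=
        { default := ⟨0, h0b⟩,
          uniq := fun g => Subtype.ext (hb g) }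
      exact ⟨Equiv.ofUnique _ _⟩
    · have hRne : R.1.Nonempty := nonempty_iff_ne_empty.2 hR
      have hRne' : (eRO R).1.Nonempty :=
        nonempty_iff_ne_empty.2 (fun h => hR ((eRO_empty R).2 h))
      have e1 : {f // ka f = R}
          ≃ {f : C(↥(Set.Icc (0:ℝ) 1), ℝ) // interior (closure {x | f x ≠ 0}) = R.1} :=
        Equiv.subtypeEquivRight (fun f => by
          constructor
          · intro h; exact congrArg Subtype.val h
          · intro h; exact Subtype.ext h)
      have e2 : {g // kb g = eRO R}
          ≃ {g : C(↥(Metric.sphere (0:ℂ) 1), ℝ) //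
              interior (closure {y | g y ≠ 0}) = (eRO R).1} :=
        Equiv.subtypeEquivRight (fun g => by
          constructor
          · intro h; exact congrArg Subtype.val h
          · intro h; exact Subtype.ext h)
      have hc1 := fiber_card R.2 hRne
      have hc2 := fiber_card (eRO R).2 hRne'
      have : Cardinal.mk {f // ka f = R} = Cardinal.mk {g // kb g = eRO R} := by
        rw [Cardinal.mk_congr e1, Cardinal.mk_congr e2, hc1, hc2]
      exact Cardinal.eq.1 this
  obtain ⟨T, hbij, hT⟩ := glue ka kb eRO (fun R => Classical.choice (hF R))
  refine ⟨T, hbij, fun f g => ?_⟩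
  calc {x | f x ≠ 0} ∩ {x | g x ≠ 0} = ∅
      ↔ (ka f).1 ∩ (ka g).1 = ∅ := disj_reg (coz_isOpen f) (coz_isOpen g)
    _ ↔ (eRO (ka f)).1 ∩ (eRO (ka g)).1 = ∅ := eRO_disj _ _
    _ ↔ (kb (T f)).1 ∩ (kb (T g)).1 = ∅ := by rw [hT f, hT g]
    _ ↔ {y | T f y ≠ 0} ∩ {y | T g y ≠ 0} = ∅ :=
        (disj_reg (coz_isOpen (T f)) (coz_isOpen (T g))).symm
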